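/- Let r > 0, 0 < θ < 1, λ = rθ, and let K, B ≥ 1 be integers. Let X be a nonnegative random variable with CDF F(x) = 1 + e^{−rx}θ^{K+B}/(1−θ^{K+B}) − e^{−λx}/(1−θ^{K+B}). Then E[X] = (1−θ^{K+B+1}) / (λ(1−θ^{K+B})), i.e., E[X] equals the reciprocal of the valid-update rate λ(1−θ^{K+B})/(1−θ^{K+B+1}). -/

import Mathlib

open MeasureTheory Real

lemma exp_integral_Ioi_zero {b : ℝ} (hb : 0 < b) :
    ∫ x in Set.Ioi (0 : ℝ), Real.exp (-b * x) = 1 / b := by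
  have h := integral_comp_mul_left_Ioi (fun y : ℝ => Real.exp (-y)) 0 hb
  simp only [mul_zero] at h
  have heq : (fun x : ℝ => Real.exp (-b * x)) = fun x : ℝ => Real.exp (-(b * x)) := by
    funext x; ring_nf
  rw [heq, h, integral_exp_neg_Ioi]
  simp

theorem stmt_3 (r θ lam : ℝ) (hr : 0 < r) (hθ0 : 0 < θ) (hθ1 : θ < 1) (hlam : lam = r * θ)
    (K B : ℕ) (hK : 1 ≤ K) (hB : 1 ≤ B)
    {Ω : Type*} [MeasurableSpace Ω] (μ : Measure Ω) [IsProbabilityMeasure μ]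
    (X : Ω → ℝ) (hXmeas : Measurable X) (hXnonneg : ∀ ω, 0 ≤ X ω)
    (hCDF : ∀ x : ℝ, 0 ≤ x →
      (μ {ω | X ω ≤ x}).toReal
        = 1 + Real.exp (-r * x) * θ ^ (K + B) / (1 - θ ^ (K + B))
          - Real.exp (-lam * x) / (1 - θ ^ (K + B))) :
    ∫ ω, X ω ∂μ = (1 - θ ^ (K + B + 1)) / (lam * (1 - θ ^ (K + B))) := by
  set q := K + B with hq
  have hθq : θ ^ q < 1 := pow_lt_one₀ hθ0.le hθ1 (by omega)
  set c : ℝ := 1 - θ ^ q with hc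
  have hcpos : 0 < c := sub_pos.mpr hθq
  have hlampos : 0 < lam := by rw [hlam]; positivity
  have hlamr : lam ≤ r := by rw [hlam]; nlinarith
  -- survival function
  set S : ℝ → ℝ := fun t => Real.exp (-lam * t) / c - Real.exp (-r * t) * θ ^ q / c with hS
  have hSnonneg : ∀ t : ℝ, 0 ≤ t → 0 ≤ S t := by
    intro t ht
    have h1 : Real.exp (-r * t) * θ ^ q ≤ Real.exp (-lam * t) := by
      have h2 : Real.exp (-r * t) ≤ Real.exp (-lam * t) :=
        Real.exp_le_exp.mpr (by nlinarith)
      have h3 : Real.exp (-r * t) * θ ^ q ≤ Real.exp (-r * t) * 1 :=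
        mul_le_mul_of_nonneg_left hθq.le (Real.exp_pos _).le
      nlinarith
    simp only [hS]
    rw [div_sub_div_same]
    exact div_nonneg (by linarith) hcpos.le
  -- survival identity
  have hsurv : ∀ t : ℝ, 0 < t → μ {ω | t < X ω} = ENNReal.ofReal (S t) := by
    intro t ht
    have hms : MeasurableSet {ω | X ω ≤ t} := hXmeas measurableSet_Iic
    have hcompl : {ω | t < X ω} = {ω | X ω ≤ t}ᶜ := by
      ext ω; simp [not_le]
    rw [hcompl, measure_compl hms (measure_ne_top μ _)]
    have hmeasle : μ {ω | X ω ≤ t} ≤ 1 := prob_le_one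
    have hfin : μ Set.univ - μ {ω | X ω ≤ t} ≠ ⊤ := by
      simp [measure_ne_top]
    rw [← ENNReal.ofReal_toReal hfin]
    congr 1
    rw [ENNReal.toReal_sub_of_le (by simpa using hmeasle) (measure_ne_top μ _)]
    rw [measure_univ, ENNReal.toReal_one, hCDF t ht.le]
    simp only [hS]
    ring
  -- integrability of S on Ioi 0
  have hSint : IntegrableOn S (Set.Ioi (0:ℝ)) := by
    apply Integrable.sub
    · exact (exp_neg_integrableOn_Ioi 0 hlampos).div_const c
    · exact ((exp_neg_integrableOn_Ioi 0 hr).mul_const (θ ^ q)).div_const c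
  -- layer cake
  have hXnn : 0 ≤ᵐ[μ] X := Filter.Eventually.of_forall hXnonneg
  have hlayer := lintegral_eq_lintegral_meas_lt μ hXnn hXmeas.aemeasurable
  have hcongr : ∫⁻ t in Set.Ioi (0:ℝ), μ {a | t < X a}
      = ∫⁻ t in Set.Ioi (0:ℝ), ENNReal.ofReal (S t) := by
    apply setLIntegral_congr_fun measurableSet_Ioi
    exact fun t ht => hsurv t ht
  have hSnnae : 0 ≤ᵐ[volume.restrict (Set.Ioi (0:ℝ))] S := by
    filter_upwards [ae_restrict_mem measurableSet_Ioi] with t ht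
    exact hSnonneg t (le_of_lt ht)
  have hofReal : ENNReal.ofReal (∫ t in Set.Ioi (0:ℝ), S t)
      = ∫⁻ t in Set.Ioi (0:ℝ), ENNReal.ofReal (S t) :=
    ofReal_integral_eq_lintegral_ofReal hSint hSnnae
  -- value of the integral of S
  have hIS : ∫ t in Set.Ioi (0:ℝ), S t = (1 - θ ^ (q + 1)) / (lam * c) := by
    have h1 : ∫ t in Set.Ioi (0:ℝ), S t
        = (∫ t in Set.Ioi (0:ℝ), Real.exp (-lam * t)) / c
          - (∫ t in Set.Ioi (0:ℝ), Real.exp (-r * t)) * θ ^ q / c := by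
      rw [← integral_div, ← integral_mul_const, ← integral_div,
        ← integral_sub ((exp_neg_integrableOn_Ioi 0 hlampos).div_const c)
          (((exp_neg_integrableOn_Ioi 0 hr).mul_const (θ ^ q)).div_const c)]
    rw [h1, exp_integral_Ioi_zero hlampos, exp_integral_Ioi_zero hr]
    have hrne : r ≠ 0 := hr.ne'
    have hθne : θ ≠ 0 := hθ0.ne'
    have hcne : c ≠ 0 := hcpos.ne'
    rw [hlam]
    rw [pow_succ]
    field_simp
  -- final assembly
  rw [integral_eq_lintegral_of_nonneg_ae hXnn hXmeas.aestronglyMeasurable]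
  have hnn : 0 ≤ (1 - θ ^ (q + 1)) / (lam * c) :=
    div_nonneg (sub_nonneg.mpr (pow_lt_one₀ hθ0.le hθ1 (by omega)).le) (by positivity)
  rw [hlayer, hcongr, ← hofReal, hIS, ENNReal.toReal_ofReal hnn]
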